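/- If G, M1, …, Mn are non-empty graphs with |V(G)| = n, then there is a GS derivation from M1 ⊗ ⋯ ⊗ Mn to G⟨M1, …, Mn⟩. -/

import Mathlib

namespace GSP

/-- Atoms: a propositional variable (coded by a natural number) with a polarity. -/
abbrev Atom := ℕ × Bool

/-- The dual atom. -/
def dualAtom (a : Atom) : Atom := (a.1, !a.2)

/-- A finite, simple, undirected graph whose vertices are labelled by atoms. -/
structure LGraph where
  V : Type
  [fintype : Fintype V]
  adj : V → V → Prop
  symm : ∀ {v w : V}, adj v w → adj w v
  irrefl : ∀ v : V, ¬ adj v v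
  label : V → Atom

attribute [instance] LGraph.fintype

namespace LGraph

/-- An isomorphism of labelled graphs: a vertex bijection preserving labels and
preserving and reflecting edges. -/
structure Iso (G H : LGraph) where
  toEquiv : G.V ≃ H.V
  adj_iff : ∀ v w : G.V, G.adj v w ↔ H.adj (toEquiv v) (toEquiv w)
  label_eq : ∀ v : G.V, H.label (toEquiv v) = G.label v

/-- `G ≅ H` : the graphs `G` and `H` are isomorphic. -/
def iso (G H : LGraph) : Prop := Nonempty (Iso G H)

/-- The empty graph. -/
def empty : LGraph where
  V := Empty
  adj _ _ := False
  symm h := h.elim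
  irrefl v := v.elim
  label v := v.elim

/-- The single-vertex graph labelled by the atom `a`. -/
def single (a : Atom) : LGraph where
  V := Unit
  adj _ _ := False
  symm h := h.elim
  irrefl _ h := h
  label _ := a

def parAdj (G H : LGraph) : G.V ⊕ H.V → G.V ⊕ H.V → Prop
  | .inl a, .inl b => G.adj a b
  | .inr a, .inr b => H.adj a b
  | _, _ => False

/-- The par `G ⅋ H` : disjoint union of `G` and `H`. -/
def par (G H : LGraph) : LGraph where
  V := G.V ⊕ H.V
  adj := parAdj G H
  symm := by
    rintro (a | a) (b | b) h
    · exact G.symm h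
    · exact h.elim
    · exact h.elim
    · exact H.symm h
  irrefl := by
    rintro (a | a) h
    · exact G.irrefl a h
    · exact H.irrefl a h
  label := Sum.elim G.label H.label

def tensorAdj (G H : LGraph) : G.V ⊕ H.V → G.V ⊕ H.V → Prop
  | .inl a, .inl b => G.adj a b
  | .inr a, .inr b => H.adj a b
  | .inl _, .inr _ => True
  | .inr _, .inl _ => True

/-- The tensor `G ⊗ H` : join of `G` and `H` (disjoint union plus all edges in between). -/
def tensor (G H : LGraph) : LGraph where
  V := G.V ⊕ H.V
  adj := tensorAdj G H
  symm := by
    rintro (a | a) (b | b) h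
    · exact G.symm h
    · exact trivial
    · exact trivial
    · exact H.symm h
  irrefl := by
    rintro (a | a) h
    · exact G.irrefl a h
    · exact H.irrefl a h
  label := Sum.elim G.label H.label

/-- The dual graph `Ḡ` : same vertices, complemented edges, dualized labels. -/
def dual (G : LGraph) : LGraph where
  V := G.V
  adj v w := v ≠ w ∧ ¬ G.adj v w
  symm h := ⟨fun e => h.1 e.symm, fun h' => h.2 (G.symm h')⟩
  irrefl _ h := h.1 rfl
  label v := dualAtom (G.label v)

def plugAdj (C : LGraph) (R : Set C.V) (X : LGraph) : C.V ⊕ X.V → C.V ⊕ X.V → Prop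
  | .inl a, .inl b => C.adj a b
  | .inr a, .inr b => X.adj a b
  | .inl a, .inr _ => a ∈ R
  | .inr _, .inl b => b ∈ R

/-- `C[X]_R` : the graph obtained from the context `C[·]_R` by inserting the graph `X`
as a module whose vertices are adjacent exactly to the vertices in `R`. -/
def plug (C : LGraph) (R : Set C.V) (X : LGraph) : LGraph where
  V := C.V ⊕ X.V
  adj := plugAdj C R X
  symm := by
    rintro (a | a) (b | b) h
    · exact C.symm h
    · exact h
    · exact h
    · exact X.symm h
  irrefl := by
    rintro (a | a) h
    · exact C.irrefl a h
    · exact X.irrefl a h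
  label := Sum.elim C.label X.label

def compAdj (G : LGraph) (H : G.V → LGraph) :
    (Σ v : G.V, (H v).V) → (Σ v : G.V, (H v).V) → Prop := fun x y =>
  (∃ (v : G.V) (a b : (H v).V), x = ⟨v, a⟩ ∧ y = ⟨v, b⟩ ∧ (H v).adj a b) ∨
    (x.1 ≠ y.1 ∧ G.adj x.1 y.1)

/-- The composition `G⟨H v₁, …, H vₙ⟩` of the family `H` via the graph `G`:
replace each vertex `v` of `G` by the graph `H v`. -/
def comp (G : LGraph) (H : G.V → LGraph) : LGraph where
  V := Σ v : G.V, (H v).V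
  adj := compAdj G H
  symm := by
    rintro x y (⟨v, a, b, hx, hy, hab⟩ | ⟨hne, hadj⟩)
    · exact Or.inl ⟨v, b, a, hy, hx, (H v).symm hab⟩
    · exact Or.inr ⟨hne.symm, G.symm hadj⟩
  irrefl := by
    rintro ⟨v, a⟩ (⟨w, x, y, hx, hy, hxy⟩ | ⟨hne, _⟩)
    · have h := hx.symm.trans hy
      obtain rfl : x = y := by simpa using h
      exact (H w).irrefl x hxy
    · exact hne rfl
  label x := (H x.1).label x.2

/-- A module of `G` : a set `M` of vertices such that every vertex outside `M`
is adjacent either to all vertices of `M` or to none of them. -/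
def IsModule (G : LGraph) (M : Set G.V) : Prop :=
  ∀ v ∉ M, ∀ x ∈ M, ∀ y ∈ M, (G.adj v x ↔ G.adj v y)

/-- A prime graph: at least 2 vertices and only trivial modules. -/
def Prime (G : LGraph) : Prop :=
  2 ≤ Fintype.card G.V ∧
    ∀ M : Set G.V, G.IsModule M → M = ∅ ∨ (∃ v, M = {v}) ∨ M = Set.univ

/-- `G` is `P₄`-free: no four distinct vertices induce a path on 4 vertices. -/
def P4Free (G : LGraph) : Prop :=
  ¬ ∃ v₁ v₂ v₃ v₄ : G.V,
      v₁ ≠ v₂ ∧ v₁ ≠ v₃ ∧ v₁ ≠ v₄ ∧ v₂ ≠ v₃ ∧ v₂ ≠ v₄ ∧ v₃ ≠ v₄ ∧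
      G.adj v₁ v₂ ∧ G.adj v₂ v₃ ∧ G.adj v₃ v₄ ∧
      ¬ G.adj v₁ v₃ ∧ ¬ G.adj v₁ v₄ ∧ ¬ G.adj v₂ v₄

end LGraph

open LGraph

/-- The `n`-fold tensor `X₁ ⊗ ⋯ ⊗ Xₙ`. -/
def bigTensor : (n : ℕ) → (Fin n → LGraph) → LGraph
  | 0, _ => LGraph.empty
  | n + 1, F => (F 0).tensor (bigTensor n fun i => F i.succ)

/-- The `n`-fold par `X₁ ⅋ ⋯ ⅋ Xₙ`. -/
def bigPar : (n : ℕ) → (Fin n → LGraph) → LGraph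
  | 0, _ => LGraph.empty
  | n + 1, F => (F 0).par (bigPar n fun i => F i.succ)

/-- The inference rules of system GS (premise, conclusion). -/
inductive GSRule : LGraph → LGraph → Prop
  /-- ai↓ : premise `∅`, conclusion `ā ⅋ a`. -/
  | ai (a : Atom) : GSRule LGraph.empty ((single (dualAtom a)).par (single a))
  /-- ss↓ : premise `B[A]_S`, conclusion `B ⅋ A`, for `A ≠ ∅` and `S ≠ ∅`. -/
  | ss (A B : LGraph) (S : Set B.V) :
      Nonempty A.V → S ≠ ∅ → GSRule (B.plug S A) (B.par A)
  /-- p↓ : premise `(M₁ ⅋ N₁) ⊗ ⋯ ⊗ (Mₙ ⅋ Nₙ)`, conclusion `P̄⟨M₁,…,Mₙ⟩ ⅋ P⟨N₁,…,Nₙ⟩`,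
  for `P` prime with `n = |V(P)| ≥ 4` and all `Mᵢ ≠ ∅`. -/
  | p (n : ℕ) (P : LGraph) (e : P.V ≃ Fin n) (M N : Fin n → LGraph) :
      P.Prime → 4 ≤ n → (∀ i, Nonempty (M i).V) →
      GSRule (bigTensor n fun i => (M i).par (N i))
        ((P.dual.comp fun v => M (e v)).par (P.comp fun v => N (e v)))

/-- The "up" rules ai↑, ss↑, p↑ (premise, conclusion). -/
inductive UpRule : LGraph → LGraph → Prop
  /-- ai↑ : premise `a ⊗ ā`, conclusion `∅`. -/
  | ai (a : Atom) : UpRule ((single a).tensor (single (dualAtom a))) LGraph.empty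
  /-- ss↑ : premise `B ⊗ A`, conclusion `B[A]_S`, for `A ≠ ∅` and `S ≠ V(B)`. -/
  | ss (A B : LGraph) (S : Set B.V) :
      Nonempty A.V → S ≠ Set.univ → UpRule (B.tensor A) (B.plug S A)
  /-- p↑ : premise `P⟨M₁,…,Mₙ⟩ ⊗ P̄⟨N₁,…,Nₙ⟩`, conclusion `(M₁ ⊗ N₁) ⅋ ⋯ ⅋ (Mₙ ⊗ Nₙ)`,
  for `P` prime with `n = |V(P)| ≥ 4` and all `Mᵢ ≠ ∅`. -/
  | p (n : ℕ) (P : LGraph) (e : P.V ≃ Fin n) (M N : Fin n → LGraph) :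
      P.Prime → 4 ≤ n → (∀ i, Nonempty (M i).V) →
      UpRule ((P.comp fun v => M (e v)).tensor (P.dual.comp fun v => N (e v)))
        (bigPar n fun i => (M i).tensor (N i))

/-- The rules of system SGS : the rules of GS together with their duals. -/
def SGSRule (G H : LGraph) : Prop := GSRule G H ∨ UpRule G H

/-- A single inference step in a system: inside some context, replace a module
isomorphic to the premise of a rule by the corresponding conclusion. -/
def Step (Rules : LGraph → LGraph → Prop) (G H : LGraph) : Prop :=
  ∃ (C : LGraph) (R : Set C.V) (p c : LGraph),
    Rules p c ∧ G.iso (C.plug R p) ∧ H.iso (C.plug R c)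

/-- A derivation in a system from `G` to `H` : a finite sequence of inference steps
and isomorphisms leading from `G` to `H`. -/
def Deriv (Rules : LGraph → LGraph → Prop) (G H : LGraph) : Prop :=
  Relation.ReflTransGen (fun X Y => X.iso Y ∨ Step Rules X Y) G H

/-- A graph is provable in a system if there is a derivation from `∅` to it. -/
def Provable (Rules : LGraph → LGraph → Prop) (G : LGraph) : Prop :=
  Deriv Rules LGraph.empty G

/-- Formulas: unit, positive and negative atoms, par and tensor. -/
inductive Formula where
  | unit : Formula
  | pos (a : ℕ) : Formula
  | neg (a : ℕ) : Formula
  | par (φ ψ : Formula) : Formula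
  | tens (φ ψ : Formula) : Formula

/-- The graph `[φ]` of a formula `φ`. -/
def Formula.graph : Formula → LGraph
  | .unit => LGraph.empty
  | .pos a => single (a, true)
  | .neg a => single (a, false)
  | .par φ ψ => φ.graph.par ψ.graph
  | .tens φ ψ => φ.graph.tensor ψ.graph

/-- Structural equivalence of formulas: the smallest congruence making `⅋` and `⊗`
associative and commutative with unit `∘`. -/
inductive Formula.equiv : Formula → Formula → Prop
  | refl (φ) : Formula.equiv φ φ
  | symm {φ ψ} : Formula.equiv φ ψ → Formula.equiv ψ φ
  | trans {φ ψ χ} : Formula.equiv φ ψ → Formula.equiv ψ χ → Formula.equiv φ χ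
  | parComm (φ ψ) : Formula.equiv (.par φ ψ) (.par ψ φ)
  | parAssoc (φ ψ χ) : Formula.equiv (.par φ (.par ψ χ)) (.par (.par φ ψ) χ)
  | parUnit (φ) : Formula.equiv (.par φ .unit) φ
  | tensComm (φ ψ) : Formula.equiv (.tens φ ψ) (.tens ψ φ)
  | tensAssoc (φ ψ χ) : Formula.equiv (.tens φ (.tens ψ χ)) (.tens (.tens φ ψ) χ)
  | tensUnit (φ) : Formula.equiv (.tens φ .unit) φ
  | parCongr {φ φ' ψ ψ'} : Formula.equiv φ φ' → Formula.equiv ψ ψ' →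
      Formula.equiv (.par φ ψ) (.par φ' ψ')
  | tensCongr {φ φ' ψ ψ'} : Formula.equiv φ φ' → Formula.equiv ψ ψ' →
      Formula.equiv (.tens φ ψ) (.tens φ' ψ')

/-- A formula is unit-free if it contains no occurrence of the unit `∘`. -/
def Formula.UnitFree : Formula → Prop
  | .unit => False
  | .pos _ => True
  | .neg _ => True
  | .par φ ψ => φ.UnitFree ∧ ψ.UnitFree
  | .tens φ ψ => φ.UnitFree ∧ ψ.UnitFree

/-- The sequent calculus MLL° (multiplicative linear logic with mix) on multisets
of formulas. -/
inductive MLL : Multiset Formula → Prop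
  | ax (a : ℕ) : MLL {Formula.pos a, Formula.neg a}
  | tens {Γ Δ : Multiset Formula} (φ ψ : Formula) :
      MLL (φ ::ₘ Γ) → MLL (ψ ::ₘ Δ) → MLL (Formula.tens φ ψ ::ₘ (Γ + Δ))
  | par {Γ : Multiset Formula} (φ ψ : Formula) :
      MLL (φ ::ₘ ψ ::ₘ Γ) → MLL (Formula.par φ ψ ::ₘ Γ)
  | mix {Γ Δ : Multiset Formula} : MLL Γ → MLL Δ → MLL (Γ + Δ)


section Statement6Aux
open LGraph

namespace LGraph

/-- The identity isomorphism. -/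
def Iso.refl' (G : LGraph) : Iso G G := ⟨Equiv.refl _, fun _ _ => Iff.rfl, fun _ => rfl⟩

/-- Inverse isomorphism. -/
def Iso.symm' {G H : LGraph} (f : Iso G H) : Iso H G where
  toEquiv := f.toEquiv.symm
  adj_iff v w := by
    have := f.adj_iff (f.toEquiv.symm v) (f.toEquiv.symm w)
    simp only [Equiv.apply_symm_apply] at this
    exact this.symm
  label_eq v := by
    have h := f.label_eq (f.toEquiv.symm v)
    simp only [Equiv.apply_symm_apply] at h
    exact h.symm

/-- Composition of isomorphisms. -/
def Iso.trans' {G H K : LGraph} (f : Iso G H) (g : Iso H K) : Iso G K where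
  toEquiv := f.toEquiv.trans g.toEquiv
  adj_iff v w := (f.adj_iff v w).trans (g.adj_iff _ _)
  label_eq v := (g.label_eq _).trans (f.label_eq _)

def isoOfEq {G H : LGraph} (h : G = H) : Iso G H := h ▸ Iso.refl' G

def isoOfIsEmpty {G H : LGraph} [IsEmpty G.V] [IsEmpty H.V] : Iso G H :=
  ⟨Equiv.equivOfIsEmpty _ _, fun v _ => isEmptyElim v, fun v => isEmptyElim v⟩

theorem compAdj_same {G : LGraph} {H : G.V → LGraph} {v : G.V} {a b : (H v).V} :
    compAdj G H ⟨v, a⟩ ⟨v, b⟩ ↔ (H v).adj a b := by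
  constructor
  · rintro (⟨w, x, y, hx, hy, hxy⟩ | ⟨hne, -⟩)
    · rw [Sigma.mk.inj_iff] at hx hy
      obtain ⟨rfl, hax⟩ := hx
      obtain ⟨-, hby⟩ := hy
      rw [eq_of_heq hax, eq_of_heq hby]
      exact hxy
    · exact absurd rfl hne
  · intro h
    exact Or.inl ⟨v, a, b, rfl, rfl, h⟩

theorem compAdj_ne {G : LGraph} {H : G.V → LGraph} {v w : G.V} (hvw : v ≠ w)
    {a : (H v).V} {b : (H w).V} :
    compAdj G H ⟨v, a⟩ ⟨w, b⟩ ↔ G.adj v w := by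
  constructor
  · rintro (⟨u, x, y, hx, hy, -⟩ | ⟨-, h⟩)
    · rw [Sigma.mk.inj_iff] at hx hy
      exact absurd (hx.1.trans hy.1.symm) hvw
    · exact h
  · exact fun h => Or.inr ⟨hvw, h⟩

/-- Congruence for composition. -/
def compIso {G G' : LGraph} {H : G.V → LGraph} {H' : G'.V → LGraph}
    (f : G.V ≃ G'.V) (hadj : ∀ v w, G.adj v w ↔ G'.adj (f v) (f w))
    (g : ∀ v, Iso (H v) (H' (f v))) : Iso (G.comp H) (G'.comp H') where
  toEquiv := Equiv.sigmaCongr f fun v => (g v).toEquiv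
  adj_iff := by
    rintro ⟨v, a⟩ ⟨w, b⟩
    show compAdj G H ⟨v, a⟩ ⟨w, b⟩ ↔
      compAdj G' H' ⟨f v, (g v).toEquiv a⟩ ⟨f w, (g w).toEquiv b⟩
    by_cases hvw : v = w
    · subst hvw
      rw [compAdj_same, compAdj_same]
      exact (g v).adj_iff a b
    · rw [compAdj_ne hvw, compAdj_ne (fun h => hvw (f.injective h))]
      exact hadj v w
  label_eq := by
    rintro ⟨v, a⟩
    exact (g v).label_eq a

/-- Right congruence for plugging. -/
def plugCongrRight {C : LGraph} (R : Set C.V) {X Y : LGraph} (f : Iso X Y) :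
    Iso (C.plug R X) (C.plug R Y) where
  toEquiv := Equiv.sumCongr (Equiv.refl _) f.toEquiv
  adj_iff := by
    rintro (a | a) (b | b)
    · exact Iff.rfl
    · exact Iff.rfl
    · exact Iff.rfl
    · exact f.adj_iff a b
  label_eq := by
    rintro (a | a)
    · rfl
    · exact f.label_eq a

/-- Left congruence for plugging. -/
def plugCongrLeft {C C' : LGraph} (f : Iso C C') {R : Set C.V} {R' : Set C'.V}
    (hR : ∀ v, v ∈ R ↔ f.toEquiv v ∈ R') (X : LGraph) :
    Iso (C.plug R X) (C'.plug R' X) where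
  toEquiv := Equiv.sumCongr f.toEquiv (Equiv.refl _)
  adj_iff := by
    rintro (a | a) (b | b)
    · exact f.adj_iff a b
    · exact hR a
    · exact hR b
    · exact Iff.rfl
  label_eq := by
    rintro (a | a)
    · exact f.label_eq a
    · rfl

/-- Pointwise congruence for composition over the same base graph. -/
def compIsoRefl {G : LGraph} {H H' : G.V → LGraph} (g : ∀ v, Iso (H v) (H' v)) :
    Iso (G.comp H) (G.comp H') where
  toEquiv := Equiv.sigmaCongrRight (fun v => (g v).toEquiv)
  adj_iff := by
    rintro ⟨v, a⟩ ⟨w, b⟩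
    show compAdj G H ⟨v, a⟩ ⟨w, b⟩ ↔
      compAdj G H' ⟨v, (g v).toEquiv a⟩ ⟨w, (g w).toEquiv b⟩
    by_cases hvw : v = w
    · subst hvw
      rw [compAdj_same, compAdj_same]
      exact (g v).adj_iff a b
    · rw [compAdj_ne hvw, compAdj_ne hvw]
  label_eq := by
    rintro ⟨v, a⟩
    exact (g v).label_eq a

/-- Congruence for a plug whose context is a composition, changing the blocks. -/
def plugCompCongr {B : LGraph} {H H' : B.V → LGraph} (g : ∀ v, Iso (H v) (H' v))
    (R0 : Set B.V) (X : LGraph) :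
    Iso ((B.comp H).plug {x | x.1 ∈ R0} X) ((B.comp H').plug {x | x.1 ∈ R0} X) :=
  plugCongrLeft (compIsoRefl g) (fun x => by rcases x with ⟨v, a⟩; exact Iff.rfl) X

/-- Associativity of plugging. -/
def plugAssoc (C : LGraph) (R : Set C.V) (C' : LGraph) (R' : Set C'.V) (X : LGraph) :
    Iso (C.plug R (C'.plug R' X))
      ((C.plug R C').plug (fun x => Sum.elim (· ∈ R) (· ∈ R') x) X) where
  toEquiv := (Equiv.sumAssoc C.V C'.V X.V).symm
  adj_iff := by rintro (a | (a | a)) (b | (b | b)) <;> exact Iff.rfl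
  label_eq := by rintro (a | (a | a)) <;> rfl

/-- Plugging into the empty context. -/
def emptyPlugIso (X : LGraph) (R : Set LGraph.empty.V) : Iso X (LGraph.empty.plug R X) where
  toEquiv :=
    ⟨Sum.inr, Sum.elim (fun e => e.elim) id, fun _ => rfl, by
      rintro (e | x)
      · exact e.elim
      · rfl⟩
  adj_iff _ _ := Iff.rfl
  label_eq _ := rfl

/-- Par with an empty graph. -/
def parEmptyIso (X Y : LGraph) [IsEmpty Y.V] : Iso (X.par Y) X where
  toEquiv :=
    ⟨Sum.elim id (fun y => isEmptyElim y), Sum.inl, by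
      rintro (a | a)
      · rfl
      · exact isEmptyElim a, fun _ => rfl⟩
  adj_iff := by
    rintro (a | a) (b | b)
    · exact Iff.rfl
    · exact isEmptyElim b
    · exact isEmptyElim a
    · exact isEmptyElim a
  label_eq := by
    rintro (a | a)
    · rfl
    · exact isEmptyElim a

/-- Induced subgraph on a property. -/
noncomputable def induceG (G : LGraph) (P : G.V → Prop) : LGraph :=
  letI : DecidablePred P := Classical.decPred P
  { V := {v // P v}
    fintype := Subtype.fintype P
    adj := fun a b => G.adj a.1 b.1
    symm := fun h => G.symm h
    irrefl := fun a h => G.irrefl a.1 h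
    label := fun a => G.label a.1 }

end LGraph

theorem derivOfIso {Rules : LGraph → LGraph → Prop} {G H : LGraph} (f : Iso G H) :
    Deriv Rules G H :=
  Relation.ReflTransGen.single (Or.inl ⟨f⟩)

theorem deriv_plug {Rules : LGraph → LGraph → Prop} (C : LGraph) (R : Set C.V) {X Y : LGraph}
    (h : Deriv Rules X Y) : Deriv Rules (C.plug R X) (C.plug R Y) := by
  induction h with
  | refl => exact .refl
  | tail _ hstep ih =>
    refine ih.tail ?_
    rcases hstep with hiso | ⟨C', R', p, c, hr, hx, hy⟩
    · obtain ⟨f⟩ := hiso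
      exact Or.inl ⟨plugCongrRight R f⟩
    · refine Or.inr ⟨C.plug R C', fun x => Sum.elim (· ∈ R) (· ∈ R') x, p, c, hr, ?_, ?_⟩
      · obtain ⟨f⟩ := hx
        exact ⟨(plugCongrRight R f).trans' (plugAssoc C R C' R' p)⟩
      · obtain ⟨f⟩ := hy
        exact ⟨(plugCongrRight R f).trans' (plugAssoc C R C' R' c)⟩

/-- The clique (complete graph) on a vertex type. -/
def cliqueOn (V : Type) [Fintype V] : LGraph where
  V := V
  adj v w := v ≠ w
  symm h := Ne.symm h
  irrefl _ h := h rfl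
  label _ := (0, true)

/-- Extracting one block of a composition as a plugged module. -/
noncomputable def blockPlugIso (Q : LGraph) (H : Q.V → LGraph) (v₀ : Q.V) :
    Iso (Q.comp H)
      (((LGraph.induceG Q (fun w => w ≠ v₀)).comp fun w => H w.1).plug
        {x | Q.adj x.1.1 v₀} (H v₀)) where
  toEquiv :=
    letI : DecidableEq Q.V := Classical.decEq Q.V
    { toFun := fun x => if h : x.1 = v₀ then Sum.inr (h ▸ x.2) else Sum.inl ⟨⟨x.1, h⟩, x.2⟩
      invFun := fun x => match x with
        | .inl y => ⟨y.1.1, y.2⟩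
        | .inr a => ⟨v₀, a⟩
      left_inv := by
        rintro ⟨v, a⟩
        by_cases h : v = v₀
        · subst h
          simp
          rfl
        · simp [h]
          rfl
      right_inv := by
        rintro (y | a)
        · obtain ⟨⟨w, hw⟩, b⟩ := y
          simp [hw]
          rfl
        · simp
          rfl }
  adj_iff := by
    letI : DecidableEq Q.V := Classical.decEq Q.V
    rintro ⟨v, a⟩ ⟨w, b⟩
    simp only [Equiv.coe_fn_mk]
    by_cases hv : v = v₀ <;> by_cases hw : w = v₀
    · subst hv; subst hw
      erw [dif_pos rfl, dif_pos rfl]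
      exact compAdj_same
    · subst hv
      erw [dif_pos rfl, dif_neg hw]
      exact (compAdj_ne (Ne.symm hw)).trans ⟨Q.symm, Q.symm⟩
    · subst hw
      erw [dif_neg hv, dif_pos rfl]
      exact compAdj_ne hv
    · erw [dif_neg hv, dif_neg hw]
      by_cases hvw : v = w
      · subst hvw
        show compAdj Q H ⟨v, a⟩ ⟨v, b⟩ ↔
          compAdj (LGraph.induceG Q (fun w => w ≠ v₀)) (fun w => H w.1)
            ⟨⟨v, hv⟩, a⟩ ⟨⟨v, hv⟩, b⟩
        exact compAdj_same.trans
          (compAdj_same (G := LGraph.induceG Q (fun w => w ≠ v₀))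
            (H := fun w => H w.1) (v := ⟨v, hv⟩)).symm
      · show compAdj Q H ⟨v, a⟩ ⟨w, b⟩ ↔
          compAdj (LGraph.induceG Q (fun w => w ≠ v₀)) (fun w => H w.1)
            ⟨⟨v, hv⟩, a⟩ ⟨⟨w, hw⟩, b⟩
        exact (compAdj_ne hvw).trans
          (compAdj_ne (G := LGraph.induceG Q (fun w => w ≠ v₀))
            (H := fun w => H w.1) (v := ⟨v, hv⟩) (w := ⟨w, hw⟩)
            (fun h => hvw (congrArg Subtype.val h))).symm
  label_eq := by
    letI : DecidableEq Q.V := Classical.decEq Q.V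
    rintro ⟨v, a⟩
    simp only [Equiv.coe_fn_mk]
    by_cases h : v = v₀
    · subst h
      erw [dif_pos rfl]
      rfl
    · erw [dif_neg h]
      rfl

section Quot

variable (G : LGraph) (S : Set G.V) (s₀ : G.V) (H : G.V → LGraph)

/-- The complement part of a module decomposition. -/
noncomputable def quotC : LGraph := LGraph.induceG G (fun v => v ∉ S)

/-- The module part of a module decomposition. -/
noncomputable def quotB : LGraph := LGraph.induceG G (fun v => v ∈ S)

/-- The attachment set. -/
noncomputable def quotR : Set (quotC G S).V := {c | G.adj c.1 s₀}

/-- The quotient graph: the outside plus one fresh vertex for the module. -/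
noncomputable def quotQ : LGraph := (quotC G S).plug (quotR G S s₀) (single (0, true))

/-- The block family for the quotient graph. -/
noncomputable def quotH : (quotQ G S s₀).V → LGraph :=
  Sum.elim (fun c => H c.1) (fun _ => (quotB G S).comp fun s => H s.1)

variable {G S s₀}

/-- Decomposing a composition along a module. -/
noncomputable def quotIso (hS : G.IsModule S) (hs₀ : s₀ ∈ S) :
    Iso (G.comp H) ((quotQ G S s₀).comp (quotH G S s₀ H)) where
  toEquiv :=
    letI : DecidablePred (· ∈ S) := Classical.decPred _
    { toFun := fun x =>
        if h : x.1 ∈ S then ⟨Sum.inr (), ⟨⟨x.1, h⟩, x.2⟩⟩ else ⟨Sum.inl ⟨x.1, h⟩, x.2⟩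
      invFun := fun x => match x with
        | ⟨.inl c, b⟩ => ⟨c.1, b⟩
        | ⟨.inr _, b⟩ => ⟨b.1.1, b.2⟩
      left_inv := by
        rintro ⟨v, a⟩
        by_cases h : v ∈ S
        · beta_reduce
          erw [dif_pos h]
        · beta_reduce
          erw [dif_neg h]
      right_inv := by
        rintro ⟨(c | u), b⟩
        · obtain ⟨v, hv⟩ := c
          beta_reduce
          erw [dif_neg hv]
        · cases u
          obtain ⟨⟨s, hs⟩, a⟩ := b
          beta_reduce
          erw [dif_pos hs] }
  adj_iff := by
    letI : DecidablePred (· ∈ S) := Classical.decPred _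
    rintro ⟨v, a⟩ ⟨w, b⟩
    simp only [Equiv.coe_fn_mk]
    by_cases hv : v ∈ S <;> by_cases hw : w ∈ S
    · erw [dif_pos hv, dif_pos hw]
      by_cases hvw : v = w
      · subst hvw
        show compAdj G H ⟨v, a⟩ ⟨v, b⟩ ↔
          compAdj (quotQ G S s₀) (quotH G S s₀ H)
            ⟨Sum.inr (), ⟨⟨v, hv⟩, a⟩⟩ ⟨Sum.inr (), ⟨⟨v, hv⟩, b⟩⟩
        refine compAdj_same.trans
          (Iff.symm ((compAdj_same (G := quotQ G S s₀) (H := quotH G S s₀ H)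
            (v := Sum.inr ())).trans ?_))
        show compAdj (quotB G S) (fun s => H s.1) ⟨⟨v, hv⟩, a⟩ ⟨⟨v, hv⟩, b⟩ ↔ _
        exact compAdj_same (G := quotB G S) (H := fun s => H s.1) (v := ⟨v, hv⟩)
      · show compAdj G H ⟨v, a⟩ ⟨w, b⟩ ↔
          compAdj (quotQ G S s₀) (quotH G S s₀ H)
            ⟨Sum.inr (), ⟨⟨v, hv⟩, a⟩⟩ ⟨Sum.inr (), ⟨⟨w, hw⟩, b⟩⟩
        refine (compAdj_ne hvw).trans
          (Iff.symm ((compAdj_same (G := quotQ G S s₀) (H := quotH G S s₀ H)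
            (v := Sum.inr ())).trans ?_))
        show compAdj (quotB G S) (fun s => H s.1) ⟨⟨v, hv⟩, a⟩ ⟨⟨w, hw⟩, b⟩ ↔ _
        exact compAdj_ne (G := quotB G S) (H := fun s => H s.1)
          (v := ⟨v, hv⟩) (w := ⟨w, hw⟩) (fun h => hvw (congrArg Subtype.val h))
    · have hvw : v ≠ w := fun h => hw (h ▸ hv)
      erw [dif_pos hv, dif_neg hw]
      show compAdj G H ⟨v, a⟩ ⟨w, b⟩ ↔
        compAdj (quotQ G S s₀) (quotH G S s₀ H)
          ⟨Sum.inr (), ⟨⟨v, hv⟩, a⟩⟩ ⟨Sum.inl ⟨w, hw⟩, b⟩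
      refine (compAdj_ne hvw).trans ?_
      refine Iff.trans ?_ (compAdj_ne (by exact Sum.inr_ne_inl)).symm
      show G.adj v w ↔ G.adj w s₀
      exact Iff.trans ⟨G.symm, G.symm⟩ (hS w hw v hv s₀ hs₀)
    · have hvw : v ≠ w := fun h => hv (h ▸ hw)
      erw [dif_neg hv, dif_pos hw]
      show compAdj G H ⟨v, a⟩ ⟨w, b⟩ ↔
        compAdj (quotQ G S s₀) (quotH G S s₀ H)
          ⟨Sum.inl ⟨v, hv⟩, a⟩ ⟨Sum.inr (), ⟨⟨w, hw⟩, b⟩⟩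
      refine (compAdj_ne hvw).trans ?_
      refine Iff.trans ?_ (compAdj_ne (by exact Sum.inl_ne_inr)).symm
      show G.adj v w ↔ G.adj v s₀
      exact hS v hv w hw s₀ hs₀
    · erw [dif_neg hv, dif_neg hw]
      by_cases hvw : v = w
      · subst hvw
        show compAdj G H ⟨v, a⟩ ⟨v, b⟩ ↔
          compAdj (quotQ G S s₀) (quotH G S s₀ H)
            ⟨Sum.inl ⟨v, hv⟩, a⟩ ⟨Sum.inl ⟨v, hv⟩, b⟩
        exact compAdj_same.trans
          (compAdj_same (G := quotQ G S s₀) (H := quotH G S s₀ H)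
            (v := Sum.inl ⟨v, hv⟩)).symm
      · have h2 : (Sum.inl ⟨v, hv⟩ : (quotQ G S s₀).V) ≠ Sum.inl ⟨w, hw⟩ := fun h =>
          hvw (congrArg Subtype.val (Sum.inl.inj h))
        show compAdj G H ⟨v, a⟩ ⟨w, b⟩ ↔
          compAdj (quotQ G S s₀) (quotH G S s₀ H)
            ⟨Sum.inl ⟨v, hv⟩, a⟩ ⟨Sum.inl ⟨w, hw⟩, b⟩
        exact (compAdj_ne hvw).trans
          (compAdj_ne (G := quotQ G S s₀) (H := quotH G S s₀ H)
            (v := Sum.inl ⟨v, hv⟩) (w := Sum.inl ⟨w, hw⟩) h2).symm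
  label_eq := by
    letI : DecidablePred (· ∈ S) := Classical.decPred _
    rintro ⟨v, a⟩
    simp only [Equiv.coe_fn_mk]
    by_cases h : v ∈ S
    · erw [dif_pos h]
      rfl
    · erw [dif_neg h]
      rfl

end Quot

/-- Congruence of `bigTensor` under pointwise isomorphism. -/
noncomputable def tensorCongr {X X' Y Y' : LGraph} (f : Iso X X') (g : Iso Y Y') :
    Iso (X.tensor Y) (X'.tensor Y') where
  toEquiv := Equiv.sumCongr f.toEquiv g.toEquiv
  adj_iff := by
    rintro (a | a) (b | b)
    · exact f.adj_iff a b
    · exact Iff.rfl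
    · exact Iff.rfl
    · exact g.adj_iff a b
  label_eq := by
    rintro (a | a)
    · exact f.label_eq a
    · exact g.label_eq a

noncomputable def bigTensorCongr :
    (n : ℕ) → {F F' : Fin n → LGraph} → (∀ i, Iso (F i) (F' i)) →
      Iso (bigTensor n F) (bigTensor n F')
  | 0, _, _, _ => Iso.refl' _
  | n + 1, _, _, g => tensorCongr (g 0) (bigTensorCongr n (fun i => g i.succ))

/-- One step of the `bigTensor`/clique-composition correspondence. -/
noncomputable def bigTensorStepIso (n : ℕ) (M : Fin (n + 1) → LGraph)
    (ih : Iso (bigTensor n fun i => M i.succ) ((cliqueOn (Fin n)).comp fun i => M i.succ)) :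
    Iso (bigTensor (n + 1) M) ((cliqueOn (Fin (n + 1))).comp M) := by
  refine Iso.trans' (tensorCongr (Iso.refl' (M 0)) ih) ?_
  refine ⟨⟨fun x => Sum.elim
        (fun a => (⟨(0 : Fin (n + 1)), a⟩ : Σ i : Fin (n + 1), (M i).V))
        (fun (y : Σ i : Fin n, (M i.succ).V) =>
          (⟨y.1.succ, y.2⟩ : Σ i : Fin (n + 1), (M i).V)) x,
      fun (x : Σ i : Fin (n + 1), (M i).V) =>
        Fin.cases (motive := fun i => (M i).V → ((M 0).V ⊕ Σ i : Fin n, (M i.succ).V))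
        (fun a => Sum.inl a) (fun i b => Sum.inr ⟨i, b⟩) x.1 x.2, ?_, ?_⟩, ?_, ?_⟩
  · rintro (a | ⟨i, b⟩)
    · simp
      rfl
    · simp
      rfl
  · rintro ⟨i, b⟩
    induction i using Fin.cases with
    | zero => simp
              rfl
    | succ i => simp
                rfl
  · rintro (a | ⟨i, a⟩) (b | ⟨j, b⟩)
    · show (M 0).adj a b ↔ compAdj (cliqueOn (Fin (n + 1))) M ⟨(0 : Fin (n + 1)), a⟩ ⟨(0 : Fin (n + 1)), b⟩
      exact (compAdj_same (G := cliqueOn (Fin (n + 1))) (H := M) (v := (0 : Fin (n + 1)))).symm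
    · show True ↔ compAdj (cliqueOn (Fin (n + 1))) M ⟨(0 : Fin (n + 1)), a⟩ ⟨Fin.succ j, b⟩
      exact iff_of_true trivial (Or.inr ⟨(Fin.succ_ne_zero j).symm, (Fin.succ_ne_zero j).symm⟩)
    · show True ↔ compAdj (cliqueOn (Fin (n + 1))) M ⟨Fin.succ i, a⟩ ⟨(0 : Fin (n + 1)), b⟩
      exact iff_of_true trivial (Or.inr ⟨Fin.succ_ne_zero i, Fin.succ_ne_zero i⟩)
    · show compAdj (cliqueOn (Fin n)) (fun i => M i.succ) ⟨i, a⟩ ⟨j, b⟩ ↔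
        compAdj (cliqueOn (Fin (n + 1))) M ⟨Fin.succ i, a⟩ ⟨Fin.succ j, b⟩
      by_cases hij : i = j
      · subst hij
        exact compAdj_same.trans
          (compAdj_same (G := cliqueOn (Fin (n + 1))) (H := M) (v := Fin.succ i)).symm
      · have hij' : Fin.succ i ≠ Fin.succ j := fun h => hij (Fin.succ_injective n h)
        exact iff_of_true (Or.inr ⟨hij, hij⟩) (Or.inr ⟨hij', hij'⟩)
  · rintro (a | ⟨i, a⟩)
    · rfl
    · rfl

noncomputable def bigTensorIso :
    (n : ℕ) → (M : Fin n → LGraph) → Iso (bigTensor n M) ((cliqueOn (Fin n)).comp M)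
  | 0, M => by
    haveI h1 : IsEmpty ((cliqueOn (Fin 0)).comp M).V := ⟨fun x => x.1.elim0⟩
    haveI h2 : IsEmpty (bigTensor 0 M).V := by
      show IsEmpty Empty
      infer_instance
    exact isoOfIsEmpty
  | n + 1, M => bigTensorStepIso n M (bigTensorIso n (fun i => M i.succ))

theorem dual_module {G : LGraph} {M : Set G.V} (h : G.dual.IsModule M) : G.IsModule M := by
  intro v hv x hx y hy
  have hvx : v ≠ x := fun e => hv (e ▸ hx)
  have hvy : v ≠ y := fun e => hv (e ▸ hy)
  have hd : (v ≠ x ∧ ¬ G.adj v x) ↔ (v ≠ y ∧ ¬ G.adj v y) := h v hv x hx y hy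
  constructor
  · intro ha
    by_contra hb
    exact (hd.mpr ⟨hvy, hb⟩).2 ha
  · intro ha
    by_contra hb
    exact (hd.mp ⟨hvx, hb⟩).2 ha

theorem trivial_of_no_nontrivial {G : LGraph}
    (hmod : ¬ ∃ S : Set G.V, G.IsModule S ∧ (∃ x ∈ S, ∃ y ∈ S, x ≠ y) ∧ S ≠ Set.univ)
    {M : Set G.V} (hM : G.IsModule M) :
    M = ∅ ∨ (∃ v, M = {v}) ∨ M = Set.univ := by
  by_cases h0 : M = ∅
  · exact Or.inl h0
  by_cases h2 : ∃ x ∈ M, ∃ y ∈ M, x ≠ y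
  · right; right
    by_contra huniv
    exact hmod ⟨M, hM, h2, huniv⟩
  · right; left
    obtain ⟨x, hx⟩ := Set.nonempty_iff_ne_empty.mpr h0
    refine ⟨x, Set.eq_singleton_iff_unique_mem.mpr ⟨hx, fun y hy => ?_⟩⟩
    by_contra hyx
    exact h2 ⟨x, hx, y, hy, fun e => hyx e.symm⟩

theorem cliqueOn_isModule (V : Type) [Fintype V] (S : Set V) : (cliqueOn V).IsModule S := by
  intro v hv x hx y hy
  exact iff_of_true (fun h => hv (h ▸ hx)) (fun h => hv (h ▸ hy))

theorem pair_module {G : LGraph} (x y z : G.V) (hxy : x ≠ y) (hxz : x ≠ z) (hyz : y ≠ z)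
    (hcov : ∀ t : G.V, t = x ∨ t = y ∨ t = z) (hiff : G.adj z x ↔ G.adj z y) :
    ∃ S : Set G.V, G.IsModule S ∧ (∃ u ∈ S, ∃ v ∈ S, u ≠ v) ∧ S ≠ Set.univ := by
  refine ⟨{x, y}, ?_, ⟨x, by simp, y, by simp, hxy⟩, fun h => ?_⟩
  · intro v hv u hu w hw
    have hvz : v = z := by
      rcases hcov v with rfl | rfl | rfl
      · exact absurd (by simp) hv
      · exact absurd (by simp) hv
      · rfl
    subst hvz
    rcases hu with rfl | hu
    · rcases hw with rfl | hw
      · exact Iff.rfl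
      · rw [Set.mem_singleton_iff] at hw
        subst hw
        exact hiff
    · rw [Set.mem_singleton_iff] at hu
      subst hu
      rcases hw with rfl | hw
      · exact hiff.symm
      · rw [Set.mem_singleton_iff] at hw
        subst hw
        exact Iff.rfl
  · have : z ∈ ({x, y} : Set G.V) := h ▸ Set.mem_univ z
    rcases this with rfl | hz
    · exact hxz rfl
    · rw [Set.mem_singleton_iff] at hz
      exact hyz hz.symm

theorem exists_module_of_card_three {G : LGraph} (h3 : Fintype.card G.V = 3) :
    ∃ S : Set G.V, G.IsModule S ∧ (∃ x ∈ S, ∃ y ∈ S, x ≠ y) ∧ S ≠ Set.univ := by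
  classical
  rw [Fintype.card, Finset.card_eq_three] at h3
  obtain ⟨a, b, c, hab, hac, hbc, huniv⟩ := h3
  have hcov : ∀ z : G.V, z = a ∨ z = b ∨ z = c := by
    intro z
    have : z ∈ (Finset.univ : Finset G.V) := Finset.mem_univ z
    rw [huniv] at this
    simpa using this
  by_cases h1 : G.adj c a ↔ G.adj c b
  · exact pair_module a b c hab hac hbc hcov h1
  by_cases h2 : G.adj b a ↔ G.adj b c
  · exact pair_module a c b hac hab (Ne.symm hbc)
      (fun t => by rcases hcov t with h | h | h <;> tauto) h2
  by_cases h3' : G.adj a b ↔ G.adj a c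
  · exact pair_module b c a hbc (Ne.symm hab) (Ne.symm hac)
      (fun t => by rcases hcov t with h | h | h <;> tauto) h3'
  · exfalso
    have s1 : G.adj c a ↔ G.adj a c := ⟨G.symm, G.symm⟩
    have s2 : G.adj c b ↔ G.adj b c := ⟨G.symm, G.symm⟩
    have s3 : G.adj b a ↔ G.adj a b := ⟨G.symm, G.symm⟩
    tauto

theorem mainLemma : ∀ (n : ℕ) (G : LGraph) (H : G.V → LGraph),
    Fintype.card G.V = n → (∀ v, Nonempty (H v).V) →
    Deriv GSRule ((cliqueOn G.V).comp H) (G.comp H) := by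
  intro n
  induction n using Nat.strong_induction_on with
  | _ n IH =>
    intro G H hcard hH
    by_cases hmod : ∃ S : Set G.V, G.IsModule S ∧ (∃ x ∈ S, ∃ y ∈ S, x ≠ y) ∧ S ≠ Set.univ
    · -- G has a nontrivial module S
      obtain ⟨S, hS, ⟨x₀, hx₀, y₀, hy₀, hxy₀⟩, hSuniv⟩ := hmod
      classical
      obtain ⟨z₀, hz₀⟩ := (Set.ne_univ_iff_exists_notMem S).mp hSuniv
      have hBc : Fintype.card (quotB G S).V = Fintype.card {v : G.V // v ∈ S} :=
        Fintype.card_congr (Equiv.refl _)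
      have hCc : Fintype.card (quotC G S).V = Fintype.card {v : G.V // v ∉ S} :=
        Fintype.card_congr (Equiv.refl _)
      have h1 : Fintype.card {v : G.V // v ∈ S} < n := by
        rw [← hcard]
        exact Fintype.card_subtype_lt (x := z₀) hz₀
      have h2 : 1 < Fintype.card {v : G.V // v ∈ S} :=
        Fintype.one_lt_card_iff.mpr
          ⟨⟨x₀, hx₀⟩, ⟨y₀, hy₀⟩, fun h => hxy₀ (congrArg Subtype.val h)⟩
      have h3 : Fintype.card {v : G.V // v ∉ S}
          = n - Fintype.card {v : G.V // v ∈ S} := by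
        rw [← hcard]
        exact Fintype.card_subtype_compl _
      have hQc : Fintype.card (quotQ G S x₀).V = Fintype.card (quotC G S).V + 1 := by
        show Fintype.card ((quotC G S).V ⊕ Unit) = _
        simp [Fintype.card_sum]
      have hQlt : Fintype.card (quotQ G S x₀).V < n := by omega
      have hBlt : Fintype.card (quotB G S).V < n := by omega
      -- inner derivation on the module block
      have dInner : Deriv GSRule ((cliqueOn (quotB G S).V).comp fun s => H s.1)
          ((quotB G S).comp fun s => H s.1) :=
        IH _ hBlt (quotB G S) (fun s => H s.1) rfl (fun s => hH s.1)
      -- block family on the quotient vertex set, with the clique block at the new vertex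
      have dQ : Deriv GSRule ((cliqueOn (quotQ G S x₀).V).comp (quotH G S x₀ H))
          ((quotQ G S x₀).comp (quotH G S x₀ H)) := by
        refine IH _ hQlt (quotQ G S x₀) (quotH G S x₀ H) rfl ?_
        rintro (c | u)
        · exact hH c.1
        · exact ⟨⟨⟨x₀, hx₀⟩, Classical.choice (hH x₀)⟩⟩
      -- the clique-side quotient decomposition
      have isoK : Iso ((cliqueOn G.V).comp H)
          ((quotQ (cliqueOn G.V) S x₀).comp (quotH (cliqueOn G.V) S x₀ H)) :=
        quotIso (G := cliqueOn G.V) (S := S) (s₀ := x₀) H (cliqueOn_isModule G.V S) hx₀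
      -- bridge to a clique on the quotient vertex set
      set H'' : (quotQ G S x₀).V → LGraph :=
        Sum.elim (fun c => H c.1) (fun _ => (cliqueOn (quotB G S).V).comp fun s => H s.1)
        with hH''
      have innerBridge : Iso ((quotB (cliqueOn G.V) S).comp fun s => H s.1)
          ((cliqueOn (quotB G S).V).comp fun s => H s.1) := by
        refine compIso (Equiv.refl _) ?_ (fun s => Iso.refl' _)
        intro s t
        show (s.1 ≠ t.1) ↔ (s ≠ t)
        exact ⟨fun h h' => h (congrArg Subtype.val h'),
          fun h h' => h (Subtype.ext h')⟩
      have bridge : Iso ((quotQ (cliqueOn G.V) S x₀).comp (quotH (cliqueOn G.V) S x₀ H))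
          ((cliqueOn (quotQ G S x₀).V).comp H'') := by
        refine compIso (Equiv.refl _) ?_ ?_
        · rintro (c | u) (d | u')
          · show (c.1 ≠ d.1) ↔ (Sum.inl c ≠ Sum.inl d)
            exact ⟨fun h h' => h (congrArg Subtype.val (Sum.inl.inj h')),
              fun h h' => h (congrArg Sum.inl (Subtype.ext h'))⟩
          · exact iff_of_true (fun h => c.2 (h ▸ hx₀)) (fun h => Sum.inl_ne_inr h)
          · exact iff_of_true (fun h => d.2 (h ▸ hx₀)) (fun h => Sum.inr_ne_inl h)
          · cases u
            cases u'
            exact iff_of_false (fun h => h) (fun h => h rfl)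
        · rintro (c | u)
          · exact Iso.refl' _
          · exact innerBridge
      -- replace the clique block by the module block, inside the plug context
      have dMid : Deriv GSRule ((cliqueOn (quotQ G S x₀).V).comp H'')
          ((cliqueOn (quotQ G S x₀).V).comp (quotH G S x₀ H)) := by
        have gfun : ∀ w : ((cliqueOn (quotQ G S x₀).V).induceG
              fun w => w ≠ Sum.inr ()).V,
            Iso (H'' w.1) (quotH G S x₀ H w.1) := by
          rintro ⟨(c | u), hx⟩
          · exact Iso.refl' _
          · cases u
            exact absurd rfl hx
        have plugiso := plugCompCongr gfun
          ({w : ((cliqueOn (quotQ G S x₀).V).induceG fun w => w ≠ Sum.inr ()).V |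
            (cliqueOn (quotQ G S x₀).V).adj w.1 (Sum.inr ())})
          (quotH G S x₀ H (Sum.inr ()))
        have bp1 := blockPlugIso (cliqueOn (quotQ G S x₀).V) H'' (Sum.inr ())
        have bp2 := (blockPlugIso (cliqueOn (quotQ G S x₀).V)
          (quotH G S x₀ H) (Sum.inr ())).symm'
        exact (derivOfIso bp1).trans
          ((deriv_plug _ _ dInner).trans
            ((derivOfIso plugiso).trans (derivOfIso bp2)))
      exact (derivOfIso (isoK.trans' bridge)).trans
        (dMid.trans (dQ.trans (derivOfIso (quotIso H hS hx₀).symm')))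
    · -- G has only trivial modules
      rcases n with _ | _ | _ | _ | m
      · haveI h0 : IsEmpty G.V := Fintype.card_eq_zero_iff.mp hcard
        haveI : IsEmpty ((cliqueOn G.V).comp H).V := ⟨fun x => h0.false x.1⟩
        haveI : IsEmpty (G.comp H).V := ⟨fun x => h0.false x.1⟩
        exact derivOfIso isoOfIsEmpty
      · haveI : Subsingleton G.V :=
          Fintype.card_le_one_iff_subsingleton.mp (by omega)
        refine derivOfIso (compIso (Equiv.refl _) ?_ (fun v => Iso.refl' _))
        intro v w
        have hvw : v = w := Subsingleton.elim (α := G.V) v w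
        subst hvw
        exact iff_of_false (fun h => h rfl) (G.irrefl v)
      · -- two vertices
        obtain ⟨v, w, hvw, hcov⟩ : ∃ v w : G.V, v ≠ w ∧ ∀ z, z = v ∨ z = w := by
          classical
          rw [Fintype.card, Finset.card_eq_two] at hcard
          obtain ⟨x, y, hxy, huniv⟩ := hcard
          refine ⟨x, y, hxy, fun z => ?_⟩
          have : z ∈ (Finset.univ : Finset G.V) := Finset.mem_univ z
          rw [huniv] at this
          simpa using this
        by_cases hadj : G.adj v w
        · refine derivOfIso (compIso (Equiv.refl G.V) ?_ (fun _ => Iso.refl' _))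
          intro x y
          show (x ≠ y) ↔ G.adj x y
          constructor
          · intro hxy
            rcases hcov x with rfl | rfl <;> rcases hcov y with rfl | rfl
            · exact absurd rfl hxy
            · exact hadj
            · exact G.symm hadj
            · exact absurd rfl hxy
          · intro h h'
            subst h'
            exact G.irrefl x h
        · classical
          have univne : (Set.univ : Set (H w).V) ≠ ∅ := fun h =>
            (Set.univ_eq_empty_iff.mp h).false (Classical.choice (hH w))
          refine Relation.ReflTransGen.single (Or.inr ⟨LGraph.empty, ∅,
            (H w).plug Set.univ (H v), (H w).par (H v),
            GSRule.ss (H v) (H w) Set.univ (hH v) univne, ⟨?_⟩, ⟨?_⟩⟩)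
          · refine Iso.trans' ?_ (emptyPlugIso _ _)
            refine ⟨⟨fun p => if h : p.1 = v then Sum.inr (h ▸ p.2)
                else Sum.inl (((hcov p.1).resolve_left h) ▸ p.2),
              fun x => Sum.elim (fun b => (⟨w, b⟩ : Σ x : G.V, (H x).V))
                (fun a => ⟨v, a⟩) x, ?_, ?_⟩, ?_, ?_⟩
            · rintro ⟨x, a⟩
              rcases hcov x with rfl | rfl
              · simp
                try rfl
              · beta_reduce
                erw [dif_neg (Ne.symm hvw)]
                try rfl
            · rintro (b | a)
              · beta_reduce
                erw [dif_neg (Ne.symm hvw)]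
                try rfl
              · beta_reduce
                erw [dif_pos rfl]
                try rfl
            · rintro ⟨x, a⟩ ⟨y, b⟩
              simp only [Equiv.coe_fn_mk]
              rcases hcov x with rfl | rfl <;> rcases hcov y with rfl | rfl
              · erw [dif_pos rfl, dif_pos rfl]
                exact compAdj_same
              · erw [dif_pos rfl, dif_neg (Ne.symm hvw)]
                exact iff_of_true (Or.inr ⟨hvw, hvw⟩) (Set.mem_univ _)
              · erw [dif_neg (Ne.symm hvw), dif_pos rfl]
                exact iff_of_true (Or.inr ⟨Ne.symm hvw, Ne.symm hvw⟩) (Set.mem_univ _)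
              · erw [dif_neg (Ne.symm hvw), dif_neg (Ne.symm hvw)]
                exact compAdj_same
            · rintro ⟨x, a⟩
              rcases hcov x with rfl | rfl
              · simp
                try rfl
              · erw [Equiv.coe_fn_mk]
                beta_reduce
                erw [dif_neg (Ne.symm hvw)]
                try rfl
          · refine Iso.trans' ?_ (emptyPlugIso _ _)
            refine ⟨⟨fun p => if h : p.1 = v then Sum.inr (h ▸ p.2)
                else Sum.inl (((hcov p.1).resolve_left h) ▸ p.2),
              fun x => Sum.elim (fun b => (⟨w, b⟩ : Σ x : G.V, (H x).V))
                (fun a => ⟨v, a⟩) x, ?_, ?_⟩, ?_, ?_⟩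
            · rintro ⟨x, a⟩
              rcases hcov x with rfl | rfl
              · simp
                try rfl
              · beta_reduce
                erw [dif_neg (Ne.symm hvw)]
                try rfl
            · rintro (b | a)
              · beta_reduce
                erw [dif_neg (Ne.symm hvw)]
                try rfl
              · beta_reduce
                erw [dif_pos rfl]
                try rfl
            · rintro ⟨x, a⟩ ⟨y, b⟩
              simp only [Equiv.coe_fn_mk]
              rcases hcov x with rfl | rfl <;> rcases hcov y with rfl | rfl
              · erw [dif_pos rfl, dif_pos rfl]
                exact compAdj_same
              · erw [dif_pos rfl, dif_neg (Ne.symm hvw)]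
                exact iff_of_false (fun h => hadj ((compAdj_ne hvw).mp h)) (fun h => h)
              · erw [dif_neg (Ne.symm hvw), dif_pos rfl]
                exact iff_of_false
                  (fun h => hadj (G.symm ((compAdj_ne (Ne.symm hvw)).mp h))) (fun h => h)
              · erw [dif_neg (Ne.symm hvw), dif_neg (Ne.symm hvw)]
                exact compAdj_same
            · rintro ⟨x, a⟩
              rcases hcov x with rfl | rfl
              · simp
                try rfl
              · erw [Equiv.coe_fn_mk]
                beta_reduce
                erw [dif_neg (Ne.symm hvw)]
                try rfl
      · exact absurd (exists_module_of_card_three hcard) hmod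
      · -- at least four vertices: G (hence its dual) is prime, use p↓
        have hprime : G.dual.Prime := by
          constructor
          · show 2 ≤ Fintype.card G.V
            omega
          · intro M hM
            exact trivial_of_no_nontrivial hmod (dual_module hM)
        set e' : G.V ≃ Fin (m + 4) := Fintype.equivFinOfCardEq hcard with he'
        haveI hEmp : IsEmpty LGraph.empty.V := by
          show IsEmpty Empty
          infer_instance
        have i1 : Iso (bigTensor (m + 4) fun i => (H (e'.symm i)).par LGraph.empty)
            (bigTensor (m + 4) fun i => H (e'.symm i)) :=
          bigTensorCongr _ (fun i => parEmptyIso _ _)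
        have i2 := bigTensorIso (m + 4) (fun i => H (e'.symm i))
        have i3 : Iso ((cliqueOn (Fin (m + 4))).comp fun i => H (e'.symm i))
            ((cliqueOn G.V).comp H) :=
          compIso e'.symm
            (fun i j => (not_congr (Equiv.apply_eq_iff_eq e'.symm)).symm)
            (fun i => Iso.refl' _)
        haveI hE2 : IsEmpty (G.dual.comp fun _ : G.dual.V => LGraph.empty).V :=
          ⟨fun x => Empty.elim x.2⟩
        have c1 : Iso
            ((G.dual.dual.comp fun v => H (e'.symm (e' v))).par
              (G.dual.comp fun _ => LGraph.empty))
            (G.dual.dual.comp fun v => H (e'.symm (e' v))) := parEmptyIso _ _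
        have c2 : Iso (G.dual.dual.comp fun v => H (e'.symm (e' v))) (G.comp H) := by
          refine compIso (Equiv.refl G.V) ?_
            (fun v => isoOfEq (congrArg H (Equiv.symm_apply_apply e' v)))
          intro v w
          show (v ≠ w ∧ ¬ (v ≠ w ∧ ¬ G.adj v w)) ↔ G.adj v w
          constructor
          · rintro ⟨h1, h2⟩
            by_contra hn
            exact h2 ⟨h1, hn⟩
          · intro h
            exact ⟨fun he => G.irrefl w (he ▸ h), fun hc => hc.2 h⟩
        refine Relation.ReflTransGen.single (Or.inr ⟨LGraph.empty, ∅,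
          bigTensor (m + 4) (fun i => (H (e'.symm i)).par LGraph.empty),
          (G.dual.dual.comp fun v => H (e'.symm (e' v))).par
            (G.dual.comp fun _ => LGraph.empty),
          GSRule.p (m + 4) G.dual e' (fun i => H (e'.symm i)) (fun _ => LGraph.empty)
            hprime (by omega) (fun i => hH _), ⟨?_⟩, ⟨?_⟩⟩)
        · exact ((i1.trans' (i2.trans' i3)).symm').trans' (emptyPlugIso _ _)
        · exact ((c1.trans' c2).symm').trans' (emptyPlugIso _ _)

end Statement6Aux

/-- If `G, M₁, …, Mₙ` are non-empty graphs with `|V(G)| = n`,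
then there is a GS derivation from `M₁ ⊗ ⋯ ⊗ Mₙ` to `G⟨M₁, …, Mₙ⟩`. -/
theorem tensor_to_composition (n : ℕ) (G : LGraph) (e : G.V ≃ Fin n)
    (hG : Nonempty G.V) (M : Fin n → LGraph) (hM : ∀ i, Nonempty (M i).V) :
    Deriv GSRule (bigTensor n M) (G.comp fun v => M (e v)) := by
  have hcard : Fintype.card G.V = n := by
    rw [Fintype.card_congr e, Fintype.card_fin]
  have d := mainLemma n G (fun v => M (e v)) hcard (fun v => hM (e v))
  refine Relation.ReflTransGen.trans (derivOfIso ?_) d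
  refine (bigTensorIso n M).trans' (compIso e.symm ?_ ?_)
  · intro i j
    exact (not_congr (Equiv.apply_eq_iff_eq e.symm)).symm
  · intro i
    exact isoOfEq (congrArg M (e.apply_symm_apply i).symm)
end GSP
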